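/- Let W : ℕ → A be an infinite word over a finite alphabet A with at least two letters. The following are equivalent: (1) W is eventually periodic; (2) W has only finitely many right special factors; (3) there exists n ≥ 1 such that T_W(n) = T_W(n + 1). -/

import Mathlib

/-- The factor of the infinite word `W` of length `n` occurring at position `i`. -/
def factorAt {A : Type*} (W : ℕ → A) (i n : ℕ) : List A :=
  (List.range n).map (fun j => W (i + j))

/-- `u` is a factor of the infinite word `W`. -/
def IsFactor {A : Type*} (W : ℕ → A) (u : List A) : Prop :=
  ∃ i : ℕ, u = factorAt W i u.length

/-- The complexity function: the number of distinct factors of `W` of length `n`. -/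
noncomputable def complexity {A : Type*} (W : ℕ → A) (n : ℕ) : ℕ :=
  Set.ncard {u : List A | u.length = n ∧ IsFactor W u}

/-- `v` is a right special factor of `W`: it admits at least two distinct
right extensions. -/
def RightSpecial {A : Type*} (W : ℕ → A) (v : List A) : Prop :=
  ∃ x y : A, x ≠ y ∧ IsFactor W (v ++ [x]) ∧ IsFactor W (v ++ [y])

/-- `W` is eventually periodic. -/
def EventuallyPeriodic {A : Type*} (W : ℕ → A) : Prop :=
  ∃ p : ℕ, 0 < p ∧ ∃ N : ℕ, ∀ n ≥ N, W (n + p) = W n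

section aux

variable {A : Type*} {W : ℕ → A}

@[simp] lemma length_factorAt (W : ℕ → A) (i n : ℕ) : (factorAt W i n).length = n := by
  simp [factorAt]

lemma isFactor_factorAt (W : ℕ → A) (i n : ℕ) : IsFactor W (factorAt W i n) :=
  ⟨i, by rw [length_factorAt]⟩

lemma factorAt_add (W : ℕ → A) (i m n : ℕ) :
    factorAt W i (m + n) = factorAt W i m ++ factorAt W (i + m) n := by
  simp only [factorAt, List.range_add, List.map_append, List.map_map]
  congr 1
  apply List.map_congr_left
  intro a _
  simp [Function.comp, add_assoc]

lemma factorAt_succ (W : ℕ → A) (i n : ℕ) :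
    factorAt W i (n + 1) = factorAt W i n ++ [W (i + n)] := by
  rw [factorAt_add]
  have : List.range 1 = [0] := rfl
  simp [factorAt, this]

lemma take_factorAt (W : ℕ → A) (i m k : ℕ) :
    (factorAt W i m).take k = factorAt W i (min k m) := by
  simp [factorAt, ← List.map_take, List.take_range]

lemma drop_factorAt (W : ℕ → A) (i m k : ℕ) :
    (factorAt W i m).drop k = factorAt W (i + k) (m - k) := by
  apply List.ext_getElem (by simp)
  intro j h1 h2
  simp only [factorAt, List.getElem_drop, List.getElem_map, List.getElem_range]
  congr 1
  omega

lemma factorAt_eq_of_agree {i j n : ℕ} (h : ∀ k < n, W (i + k) = W (j + k)) :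
    factorAt W i n = factorAt W j n := by
  apply List.map_congr_left
  intro a ha
  exact h a (List.mem_range.mp ha)

lemma isFactor_take {u : List A} (hu : IsFactor W u) (k : ℕ) : IsFactor W (u.take k) := by
  obtain ⟨i, hi⟩ := hu
  rw [hi, take_factorAt]
  exact isFactor_factorAt W i _

lemma isFactor_drop {u : List A} (hu : IsFactor W u) (k : ℕ) : IsFactor W (u.drop k) := by
  obtain ⟨i, hi⟩ := hu
  rw [hi, drop_factorAt]
  exact isFactor_factorAt W (i + k) _

/-- The set of factors of length `n`. -/
def Fset (W : ℕ → A) (n : ℕ) : Set (List A) := {u : List A | u.length = n ∧ IsFactor W u}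

lemma Fset_finite [Finite A] (W : ℕ → A) (n : ℕ) : (Fset W n).Finite :=
  (List.finite_length_eq A n).subset fun _ h => h.1

lemma Fset_nonempty (W : ℕ → A) (n : ℕ) : (Fset W n).Nonempty :=
  ⟨factorAt W 0 n, length_factorAt W 0 n, isFactor_factorAt W 0 n⟩

lemma Fset_image (W : ℕ → A) (n : ℕ) :
    (fun u : List A => u.take n) '' Fset W (n + 1) = Fset W n := by
  ext u
  constructor
  · rintro ⟨v, ⟨hv, hf⟩, rfl⟩
    exact ⟨by rw [List.length_take]; omega, isFactor_take hf n⟩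
  · rintro ⟨hu, i, hi⟩
    refine ⟨factorAt W i (n + 1), ⟨length_factorAt W i (n+1), isFactor_factorAt W i (n+1)⟩, ?_⟩
    show (factorAt W i (n + 1)).take n = u
    rw [take_factorAt, min_eq_left (by omega), hi, hu]

lemma complexity_mono [Finite A] (W : ℕ → A) (n : ℕ) :
    complexity W n ≤ complexity W (n + 1) := by
  have h := Set.ncard_image_le (s := Fset W (n+1)) (f := fun u : List A => u.take n)
    (Fset_finite W (n+1))
  rwa [Fset_image] at h

lemma complexity_pos [Finite A] (W : ℕ → A) (n : ℕ) : 0 < complexity W n :=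
  (Set.ncard_pos (Fset_finite W n)).mpr (Fset_nonempty W n)

/-- If no word of length `n` is right special, then `W` is eventually periodic. -/
lemma periodic_of_no_rs [Finite A] {n : ℕ}
    (h : ∀ v : List A, v.length = n → ¬ RightSpecial W v) : EventuallyPeriodic W := by
  have det : ∀ i j, factorAt W i n = factorAt W j n → W (i + n) = W (j + n) := by
    intro i j he
    by_contra hne
    refine h (factorAt W i n) (length_factorAt W i n)
      ⟨W (i + n), W (j + n), hne, ?_, ?_⟩
    · rw [← factorAt_succ]; exact isFactor_factorAt W i (n + 1)
    · rw [he, ← factorAt_succ]; exact isFactor_factorAt W j (n + 1)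
  have main : ∀ i j, i < j → (∀ k < n, W (i + k) = W (j + k)) → EventuallyPeriodic W := by
    intro i j hij hagree
    have key : ∀ k, W (i + k) = W (j + k) := by
      intro k
      induction k using Nat.strong_induction_on with
      | _ k ih =>
        rcases lt_or_ge k n with hk | hk
        · exact hagree k hk
        · obtain ⟨m, rfl⟩ : ∃ m, k = m + n := ⟨k - n, by omega⟩
          have hfac : factorAt W (i + m) n = factorAt W (j + m) n := by
            apply factorAt_eq_of_agree
            intro a ha
            have := ih (m + a) (by omega)
            simpa [add_assoc] using this
          have := det (i + m) (j + m) hfac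
          simpa [add_assoc] using this
    refine ⟨j - i, by omega, i, fun n' hn' => ?_⟩
    have hk := key (n' - i)
    have h1 : i + (n' - i) = n' := by omega
    have h2 : j + (n' - i) = n' + (j - i) := by omega
    rw [h1, h2] at hk
    exact hk.symm
  obtain ⟨i, j, hne, he⟩ :=
    Finite.exists_ne_map_eq_of_infinite (fun i (k : Fin n) => W (i + k))
  have hag : ∀ k < n, W (i + k) = W (j + k) := fun k hk => congrFun he ⟨k, hk⟩
  rcases lt_or_gt_of_ne hne with h' | h'
  · exact main i j h' hag
  · exact main j i h' (fun k hk => (hag k hk).symm)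

lemma no_rs_of_complexity_eq [Finite A] {n : ℕ}
    (h : complexity W n = complexity W (n + 1)) :
    ∀ v : List A, n ≤ v.length → ¬ RightSpecial W v := by
  have hinj : Set.InjOn (fun u : List A => u.take n) (Fset W (n + 1)) := by
    apply Set.injOn_of_ncard_image_eq _ (Fset_finite W (n + 1))
    rw [Fset_image]
    have h1 : complexity W n = (Fset W n).ncard := rfl
    have h2 : complexity W (n + 1) = (Fset W (n + 1)).ncard := rfl
    rw [← h1, ← h2]
    exact h
  -- first, no right special word of length exactly n
  have hn : ∀ v : List A, v.length = n → ¬ RightSpecial W v := by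
    rintro v hv ⟨x, y, hxy, hx, hy⟩
    have hvx : v ++ [x] ∈ Fset W (n + 1) := ⟨by simp [hv], hx⟩
    have hvy : v ++ [y] ∈ Fset W (n + 1) := ⟨by simp [hv], hy⟩
    have := hinj hvx hvy (by simp [List.take_left' hv])
    exact hxy (by simpa using this)
  rintro v hv ⟨x, y, hxy, hx, hy⟩
  refine hn (v.drop (v.length - n)) (by rw [List.length_drop]; omega)
    ⟨x, y, hxy, ?_, ?_⟩
  · have := isFactor_drop hx (v.length - n)
    rwa [List.drop_append_of_le_length (by omega)] at this
  · have := isFactor_drop hy (v.length - n)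
    rwa [List.drop_append_of_le_length (by omega)] at this

end aux

/-- For an infinite word over a finite alphabet with at least two letters, the
following are equivalent: eventual periodicity; finitely many right special
factors; the complexity function takes equal values at some `n ≥ 1` and `n+1`. -/
theorem stmt3 {A : Type*} [Fintype A] (hA : 2 ≤ Fintype.card A) (W : ℕ → A) :
    List.TFAE
      [EventuallyPeriodic W,
       {v : List A | IsFactor W v ∧ RightSpecial W v}.Finite,
       ∃ n : ℕ, 1 ≤ n ∧ complexity W n = complexity W (n + 1)] := by
  tfae_have 1 → 3 := by
    rintro ⟨p, hp, N, hN⟩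
    -- complexity is bounded by N + p
    have hrep : ∀ n i, ∃ i' < N + p, factorAt W i' n = factorAt W i n := by
      intro n i
      induction i using Nat.strong_induction_on with
      | _ i ih =>
        rcases lt_or_ge i (N + p) with hi | hi
        · exact ⟨i, hi, rfl⟩
        · obtain ⟨i', hi', he⟩ := ih (i - p) (by omega)
          refine ⟨i', hi', he.trans ?_⟩
          apply factorAt_eq_of_agree
          intro k _
          have := hN (i - p + k) (by omega)
          have h2 : i - p + k + p = i + k := by omega
          rw [h2] at this
          exact this.symm
    have hbound : ∀ n, complexity W n ≤ N + p := by
      intro n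
      have hsub : Fset W n ⊆ (fun i => factorAt W i n) '' ↑(Finset.range (N + p)) := by
        rintro u ⟨hlen, i, hi⟩
        obtain ⟨i', hi', he⟩ := hrep n i
        refine ⟨i', by simpa using hi', ?_⟩
        show factorAt W i' n = u
        rw [he, hi, hlen]
      calc complexity W n ≤ ((fun i => factorAt W i n) '' ↑(Finset.range (N + p))).ncard :=
            Set.ncard_le_ncard hsub (((Finset.range (N + p)).finite_toSet).image _)
        _ ≤ (↑(Finset.range (N + p)) : Set ℕ).ncard :=
            Set.ncard_image_le ((Finset.range (N + p)).finite_toSet)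
        _ = N + p := by rw [Set.ncard_coe_finset, Finset.card_range]
    by_contra hcon
    push_neg at hcon
    have hstrict : ∀ n, 1 ≤ n → complexity W n < complexity W (n + 1) :=
      fun n hn => lt_of_le_of_ne (complexity_mono W n) (hcon n hn)
    have hgrow : ∀ k, 1 + k ≤ complexity W (1 + k) := by
      intro k
      induction k with
      | zero => exact complexity_pos W 1
      | succ k ih =>
        have h := hstrict (1 + k) (by omega)
        rw [show 1 + (k + 1) = (1 + k) + 1 from by omega]
        omega
    have := hgrow (N + p)
    have := hbound (1 + (N + p))
    omega
  tfae_have 3 → 2 := by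
    rintro ⟨n, _, hn⟩
    apply (List.finite_length_lt A n).subset
    rintro v ⟨_, hrs⟩
    simp only [Set.mem_setOf_eq]
    by_contra hlen
    push_neg at hlen
    exact no_rs_of_complexity_eq hn v hlen hrs
  tfae_have 2 → 1 := by
    intro hS
    obtain ⟨b, hb⟩ := (hS.image List.length).bddAbove
    apply periodic_of_no_rs (n := b + 1)
    rintro v hv hrs
    have hfv : IsFactor W v := by
      obtain ⟨x, y, _, hx, _⟩ := hrs
      have := isFactor_take hx v.length
      rwa [List.take_left' rfl] at this
    have : v.length ≤ b := hb ⟨v, ⟨hfv, hrs⟩, rfl⟩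
    omega
  tfae_finish
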